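/- Let f be analytic on the open unit disk D with f(0)=0, f'(0)=1, f(z) ≠ 0 for z ∈ D\{0}, and suppose h(z) = (1+z)²f(z)/z (extended by h(0)=1) satisfies Re h > 0 on D and h'(0) = 2(1+2b) with b real, b₁ := |1+2b| ≤ 1. Then for all z with |z| = r < 1, |z f'(z)/f(z) - (1+r²)/(1-r²)| ≤ 2((1+b₁)r³ + 2(1+b₁)r² + (1+b₁)r)/((1-r²)(r² + 2b₁r + 1)). -/

import Mathlib

open Metric Set Complex

noncomputable def Complex.abs : AbsoluteValue ℂ ℝ := NormedField.toAbsoluteValue ℂ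

@[simp]
lemma Complex.norm_eq_abs (z : ℂ) : ‖z‖ = Complex.abs z := rfl

@[simp]
lemma Complex.abs_conj (z : ℂ) : Complex.abs ((starRingEnd ℂ) z) = Complex.abs z :=
  Complex.norm_conj z

@[simp]
lemma Complex.abs_ofNat (n : ℕ) [n.AtLeastTwo] : Complex.abs (no_index (OfNat.ofNat n : ℂ)) = OfNat.ofNat n :=
  Complex.norm_ofNat n

lemma Complex.abs_apply (z : ℂ) : Complex.abs z = Real.sqrt (Complex.normSq z) :=
  Complex.norm_def z

lemma Complex.sq_abs (z : ℂ) : Complex.abs z ^ 2 = Complex.normSq z :=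
  Complex.sq_norm z

@[simp]
lemma Complex.abs_ofReal (x : ℝ) : Complex.abs (x : ℂ) = |x| :=
  Complex.norm_real x

lemma Complex.re_le_abs (z : ℂ) : z.re ≤ Complex.abs z :=
  Complex.re_le_norm z

lemma Complex.abs_le_abs_of_mapsTo_ball_self {f : ℂ → ℂ} {R : ℝ} {z : ℂ}
    (hd : DifferentiableOn ℂ f (ball 0 R)) (h_maps : MapsTo f (ball 0 R) (ball 0 R))
    (h₀ : f 0 = 0) (hz : Complex.abs z < R) : Complex.abs (f z) ≤ Complex.abs z :=
  Complex.norm_le_norm_of_mapsTo_ball hd (h_maps.mono_right ball_subset_closedBall) h₀ hz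

lemma Complex.abs_deriv_le_one_of_mapsTo_ball {f : ℂ → ℂ} {R : ℝ}
    (hd : DifferentiableOn ℂ f (ball 0 R)) (h_maps : MapsTo f (ball 0 R) (ball 0 R))
    (h₀ : f 0 = 0) (hR : 0 < R) : Complex.abs (deriv f 0) ≤ 1 :=
  Complex.norm_deriv_le_one_of_mapsTo_ball hd
    (by rw [h₀]; exact h_maps.mono_right ball_subset_closedBall) hR

lemma mob_den_ne {a w : ℂ} (ha : Complex.abs a < 1) (hw : Complex.abs w < 1) :
    1 + (starRingEnd ℂ) a * w ≠ 0 := by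
  intro hcon
  have h1 : (starRingEnd ℂ) a * w = -1 := by linear_combination hcon
  have : Complex.abs ((starRingEnd ℂ) a * w) = 1 := by rw [h1]; simp
  rw [map_mul, Complex.abs_conj] at this
  nlinarith [Complex.abs.nonneg a, Complex.abs.nonneg w]

lemma normSq_mob_id (a w : ℂ) :
    Complex.normSq (1 + (starRingEnd ℂ) a * w) - Complex.normSq (w + a)
      = (1 - Complex.normSq a) * (1 - Complex.normSq w) := by
  simp only [Complex.normSq_apply, Complex.add_re, Complex.add_im, Complex.mul_re,
    Complex.mul_im, Complex.conj_re, Complex.conj_im, Complex.one_re, Complex.one_im]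
  ring

lemma abs_lt_of_normSq_lt {x y : ℂ} (h : Complex.normSq x < Complex.normSq y) :
    Complex.abs x < Complex.abs y := by
  rw [Complex.abs_apply, Complex.abs_apply]
  exact Real.sqrt_lt_sqrt (Complex.normSq_nonneg x) h

lemma mob_maps {a : ℂ} (ha : Complex.abs a < 1) :
    MapsTo (fun w => (w + a) / (1 + (starRingEnd ℂ) a * w)) (ball 0 1) (ball 0 1) := by
  intro w hw
  rw [mem_ball_zero_iff] at hw ⊢
  have hw' : Complex.abs w < 1 := hw
  have hne := mob_den_ne ha hw'
  have hpos : 0 < Complex.abs (1 + (starRingEnd ℂ) a * w) := by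
    simpa [Complex.abs.pos_iff] using hne
  rw [norm_eq_abs, map_div₀, div_lt_one hpos]
  refine abs_lt_of_normSq_lt ?_
  have h1 : Complex.normSq a < 1 := by
    have := Complex.sq_abs a; nlinarith [Complex.abs.nonneg a]
  have h2 : Complex.normSq w < 1 := by
    have := Complex.sq_abs w; nlinarith [Complex.abs.nonneg w]
  nlinarith [normSq_mob_id a w]

lemma mob_diff {a : ℂ} (ha : Complex.abs a < 1) :
    DifferentiableOn ℂ (fun w => (w + a) / (1 + (starRingEnd ℂ) a * w)) (ball 0 1) := by
  refine DifferentiableOn.div (by fun_prop) (by fun_prop) ?_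
  intro w hw
  exact mob_den_ne ha (by simpa [mem_ball_zero_iff] using hw)

-- Schwarz-Pick growth bound
lemma SP1 {φ : ℂ → ℂ} (hd : DifferentiableOn ℂ φ (ball 0 1))
    (hm : MapsTo φ (ball 0 1) (ball 0 1)) {z : ℂ} (hz : z ∈ ball 0 1) :
    Complex.abs (φ z) * (1 + Complex.abs (φ 0) * Complex.abs z)
      ≤ Complex.abs (φ 0) + Complex.abs z := by
  have h0 : (0:ℂ) ∈ ball (0:ℂ) 1 := by simp
  set a := φ 0 with ha_def
  have ha : Complex.abs a < 1 := by simpa [mem_ball_zero_iff] using hm h0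
  have ha' : Complex.abs (-a) < 1 := by simpa using ha
  set F := fun w => (φ w + -a) / (1 + (starRingEnd ℂ) (-a) * φ w) with hF
  have hFd : DifferentiableOn ℂ F (ball 0 1) := (mob_diff ha').comp hd hm
  have hFm : MapsTo F (ball 0 1) (ball 0 1) := (mob_maps ha').comp hm
  have hF0 : F 0 = 0 := by simp [hF, ← ha_def]
  have hSchwarz := Complex.abs_le_abs_of_mapsTo_ball_self hFd hFm hF0
      (by simpa [mem_ball_zero_iff] using hz)
  have hφz : Complex.abs (φ z) < 1 := by simpa [mem_ball_zero_iff] using hm hz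
  have hne := mob_den_ne ha' hφz
  rw [hF] at hSchwarz
  simp only at hSchwarz
  rw [map_div₀, div_le_iff₀ (by simpa [Complex.abs.pos_iff] using hne)] at hSchwarz
  set p := Complex.abs (φ z) with hp_def
  set q := Complex.abs a with hq_def
  set s := Complex.abs z with hs_def
  have hs : s < 1 := by simpa [mem_ball_zero_iff, ← hs_def] using hz
  have hs0 : 0 ≤ s := Complex.abs.nonneg z
  have hp0 : 0 ≤ p := Complex.abs.nonneg _
  have hq0 : 0 ≤ q := Complex.abs.nonneg _
  set X := (φ z * (starRingEnd ℂ) a).re with hX_def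
  have hx : X ≤ p * q := by
    calc X ≤ Complex.abs (φ z * (starRingEnd ℂ) a) := Complex.re_le_abs _
    _ = p * q := by rw [map_mul, Complex.abs_conj]
  -- square the Schwarz inequality
  have hsq : p^2 + q^2 - 2*X ≤ s^2 * (1 + p^2*q^2 - 2*X) := by
    have h1 : Complex.abs (φ z + -a) ^ 2 = p^2 + q^2 - 2*X := by
      rw [Complex.sq_abs, show φ z + -a = φ z - a by ring, Complex.normSq_sub,
        ← Complex.sq_abs, ← Complex.sq_abs]
    have h2 : Complex.abs (1 + (starRingEnd ℂ) (-a) * φ z) ^ 2 = 1 + p^2*q^2 - 2*X := by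
      rw [Complex.sq_abs, Complex.normSq_add]
      have e : ((1:ℂ) * (starRingEnd ℂ) ((starRingEnd ℂ) (-a) * φ z)).re
          = -(φ z * (starRingEnd ℂ) a).re := by
        simp [Complex.mul_re, Complex.conj_re, Complex.conj_im]; ring
      rw [e]
      simp only [Complex.normSq_one, map_mul, Complex.normSq_conj, Complex.normSq_neg,
        ← Complex.sq_abs, Complex.abs_conj, Complex.abs.map_neg, map_one,
        ← hq_def, ← hp_def, ← hX_def]
      ring
    have hmul := mul_le_mul hSchwarz hSchwarz (Complex.abs.nonneg _)
      (by positivity)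
    calc p^2 + q^2 - 2*X = Complex.abs (φ z + -a) ^ 2 := h1.symm
      _ = Complex.abs (φ z + -a) * Complex.abs (φ z + -a) := sq (Complex.abs (φ z + -a)) ▸ by ring
      _ ≤ (s * Complex.abs (1 + (starRingEnd ℂ) (-a) * φ z)) *
          (s * Complex.abs (1 + (starRingEnd ℂ) (-a) * φ z)) := hmul
      _ = s^2 * (Complex.abs (1 + (starRingEnd ℂ) (-a) * φ z) ^ 2) := by ring
      _ = s^2 * (1 + p^2*q^2 - 2*X) := by rw [h2]
  have key : (p - q)^2 ≤ s^2 * (1 - p*q)^2 := by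
    nlinarith [mul_nonneg (sub_nonneg.2 hx) (by nlinarith : (0:ℝ) ≤ 1 - s^2)]
  have hpq1 : p * q ≤ 1 := by nlinarith
  nlinarith [sq_nonneg (p - q), mul_nonneg hs0 (sub_nonneg.2 hpq1)]

lemma SP2 {φ : ℂ → ℂ} (hd : DifferentiableOn ℂ φ (ball 0 1))
    (hm : MapsTo φ (ball 0 1) (ball 0 1)) {z : ℂ} (hz : z ∈ ball 0 1) :
    Complex.abs (deriv φ z) * (1 - Complex.abs z ^ 2) ≤ 1 - Complex.abs (φ z) ^ 2 := by
  set a := φ z with ha_def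
  have haz : Complex.abs z < 1 := by simpa [mem_ball_zero_iff] using hz
  have ha : Complex.abs a < 1 := by simpa [mem_ball_zero_iff] using hm hz
  have ha' : Complex.abs (-a) < 1 := by simpa using ha
  set m := fun w => (w + z) / (1 + (starRingEnd ℂ) z * w) with hm_def
  set g := fun w => (w + -a) / (1 + (starRingEnd ℂ) (-a) * w) with hg_def
  set G := fun w => g (φ (m w)) with hG_def
  have hm0 : m 0 = z := by simp [hm_def]
  have hGd : DifferentiableOn ℂ G (ball 0 1) :=
    ((mob_diff ha').comp hd hm).comp (mob_diff haz) (mob_maps haz)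
  have hGm : MapsTo G (ball 0 1) (ball 0 1) :=
    ((mob_maps ha').comp hm).comp (mob_maps haz)
  have hG0 : G 0 = 0 := by
    simp [hG_def, hm0, hg_def, ← ha_def]
  have hSch := Complex.abs_deriv_le_one_of_mapsTo_ball hGd hGm hG0 one_pos
  -- derivative computations
  have hnsa : (starRingEnd ℂ) a * a = ((Complex.normSq a : ℝ) : ℂ) := by
    rw [mul_comm, Complex.mul_conj]
  have hnsz : (starRingEnd ℂ) z * z = ((Complex.normSq z : ℝ) : ℂ) := by
    rw [mul_comm, Complex.mul_conj]
  have hna1 : Complex.normSq a < 1 := by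
    have := Complex.sq_abs a; nlinarith [Complex.abs.nonneg a]
  have hnz1 : Complex.normSq z < 1 := by
    have := Complex.sq_abs z; nlinarith [Complex.abs.nonneg z]
  have hdm : HasDerivAt m (((1 - Complex.normSq z : ℝ) : ℂ)) 0 := by
    have hnum : HasDerivAt (fun w : ℂ => w + z) 1 0 := (hasDerivAt_id 0).add_const z
    have hden : HasDerivAt (fun w : ℂ => 1 + (starRingEnd ℂ) z * w)
        ((starRingEnd ℂ) z * 1) 0 := ((hasDerivAt_id 0).const_mul _).const_add 1
    have h := hnum.div hden (by simp)
    refine h.congr_deriv (Eq.symm ?_)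
    push_cast
    field_simp
    linear_combination hnsz
  have hdφ : HasDerivAt φ (deriv φ z) z :=
    (hd.differentiableAt (isOpen_ball.mem_nhds hz)).hasDerivAt
  have hga : 1 + (starRingEnd ℂ) (-a) * a ≠ 0 := by
    rw [map_neg, neg_mul, hnsa]
    intro hc
    have : ((1 - Complex.normSq a : ℝ) : ℂ) = 0 := by push_cast; linear_combination hc
    rw [Complex.ofReal_eq_zero] at this
    linarith
  have hdg : HasDerivAt g ((((1 - Complex.normSq a : ℝ) : ℂ))⁻¹) a := by
    have hnum : HasDerivAt (fun w : ℂ => w + -a) 1 a := (hasDerivAt_id a).add_const (-a)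
    have hden : HasDerivAt (fun w : ℂ => 1 + (starRingEnd ℂ) (-a) * w)
        ((starRingEnd ℂ) (-a) * 1) a := ((hasDerivAt_id a).const_mul _).const_add 1
    have h := hnum.div hden hga
    refine h.congr_deriv (Eq.symm ?_)
    have hsub : (1 : ℂ) + -(starRingEnd ℂ) a * a = ((1 - Complex.normSq a : ℝ) : ℂ) := by
      push_cast; linear_combination -hnsa
    have hne : ((1 - Complex.normSq a : ℝ) : ℂ) ≠ 0 := by
      rw [Complex.ofReal_ne_zero]; linarith
    rw [map_neg, hsub]
    rw [show (1 * ((1 - Complex.normSq a : ℝ) : ℂ) - (a + -a) * (-(starRingEnd ℂ) a * 1))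
        = ((1 - Complex.normSq a : ℝ) : ℂ) by ring, sq, div_mul_cancel_left₀ hne]
  have hdG : HasDerivAt G ((((1 - Complex.normSq a : ℝ) : ℂ))⁻¹ *
      (deriv φ z * ((1 - Complex.normSq z : ℝ) : ℂ))) 0 := by
    have hdφ' : HasDerivAt φ (deriv φ z) (m 0) := hm0.symm ▸ hdφ
    have h1 := hdφ'.comp 0 hdm
    have hdg' : HasDerivAt g ((((1 - Complex.normSq a : ℝ) : ℂ))⁻¹) (φ (m 0)) := by
      rw [hm0]; exact hdg
    have h2 := hdg'.comp 0 h1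
    exact h2
  have hval : Complex.abs (deriv G 0) =
      (1 - Complex.normSq a)⁻¹ * (Complex.abs (deriv φ z) * (1 - Complex.normSq z)) := by
    rw [hdG.deriv]
    rw [map_mul, map_mul, map_inv₀, Complex.abs_ofReal, Complex.abs_ofReal,
      abs_of_pos (by linarith), abs_of_pos (by linarith)]
  rw [hval] at hSch
  have := Complex.sq_abs a
  have := Complex.sq_abs z
  rw [inv_mul_le_iff₀ (by linarith), mul_one] at hSch
  nlinarith [hSch]

lemma mccarty_num {r t b S D : ℝ} (hr0 : 0 ≤ r) (hr : r < 1) (ht0 : 0 ≤ t) (ht1 : t ≤ 1)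
    (hb0 : 0 ≤ b) (htb : t * (1 + b * r) ≤ b + r)
    (hS : 0 ≤ S) (hD : 1 - r ^ 2 * t ^ 2 ≤ D)
    (hSle : S * (1 - r ^ 2) ≤ t * (1 - r ^ 2) + r * (1 - t ^ 2)) :
    2 * r * S / D ≤ 2 * r * (b * r ^ 2 + 2 * r + b) / ((1 - r ^ 2) * (r ^ 2 + 2 * b * r + 1)) := by
  have hrt : r * t ≤ r := mul_le_of_le_one_right hr0 ht1
  have hr2 : r ^ 2 < 1 := by nlinarith
  have h1 : 0 < 1 - r ^ 2 * t ^ 2 := by nlinarith [mul_self_le_mul_self (mul_nonneg hr0 ht0) hrt]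
  have hD0 : 0 < D := lt_of_lt_of_le h1 hD
  have step1 : 2 * r * S / D ≤ 2 * r * S / (1 - r ^ 2 * t ^ 2) :=
    div_le_div_of_nonneg_left (by positivity) h1 hD
  refine step1.trans ?_
  rw [div_le_div_iff₀ h1 (mul_pos (by linarith : (0:ℝ) < 1 - r ^ 2)
    (by nlinarith [mul_nonneg hb0 hr0] : (0:ℝ) < r ^ 2 + 2 * b * r + 1))]
  nlinarith [mul_nonneg (mul_nonneg (by linarith : (0:ℝ) ≤ 2 * r)
      (by nlinarith : (0:ℝ) ≤ r ^ 2 + 2 * b * r + 1))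
      (sub_nonneg.2 hSle),
    mul_nonneg (mul_nonneg (by linarith : (0:ℝ) ≤ 2 * r)
      (by nlinarith : (0:ℝ) ≤ 1 - r * t))
      (mul_nonneg (by nlinarith : (0:ℝ) ≤ 1 - r ^ 2) (by linarith : (0:ℝ) ≤ b + r - t * (1 + b * r)))]

lemma mccarty {ψ : ℂ → ℂ} (hd : DifferentiableOn ℂ ψ (ball 0 1)) (hψ0 : ψ 0 = 0)
    (hψlt : ∀ w ∈ ball (0:ℂ) 1, Complex.abs (ψ w) < 1) {z : ℂ} (hz : z ∈ ball (0:ℂ) 1) :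
    2 * Complex.abs z * Complex.abs (deriv ψ z) / Complex.abs (1 - (ψ z) ^ 2)
      ≤ 2 * Complex.abs z * (Complex.abs (deriv ψ 0) * Complex.abs z ^ 2 + 2 * Complex.abs z
          + Complex.abs (deriv ψ 0)) /
        ((1 - Complex.abs z ^ 2) * (Complex.abs z ^ 2
          + 2 * Complex.abs (deriv ψ 0) * Complex.abs z + 1)) := by
  have hball : (ball (0:ℂ) 1) ∈ nhds (0:ℂ) := ball_mem_nhds _ one_pos
  set φ := dslope ψ 0 with hφ_def
  have hφd : DifferentiableOn ℂ φ (ball 0 1) := (differentiableOn_dslope hball).mpr hd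
  have hmaps : MapsTo ψ (ball 0 1) (ball (ψ 0) 1) := by
    intro w hw; rw [hψ0, mem_ball_zero_iff]; exact hψlt w hw
  have hφle : ∀ w ∈ ball (0:ℂ) 1, Complex.abs (φ w) ≤ 1 := by
    intro w hw
    have := Complex.norm_dslope_le_div_of_mapsTo_ball hd (hmaps.mono_right ball_subset_closedBall) hw
    simpa using this
  have hφ0 : φ 0 = deriv ψ 0 := dslope_same ψ 0
  have hψeq : ∀ w, ψ w = w * φ w := by
    intro w
    have := sub_smul_dslope ψ 0 w
    simp only [sub_zero, hψ0, smul_eq_mul] at this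
    rw [← this, ← hφ_def]
  have hφz_at : DifferentiableAt ℂ φ z := hφd.differentiableAt (isOpen_ball.mem_nhds hz)
  have hderiv : deriv ψ z = φ z + z * deriv φ z := by
    have hmul : HasDerivAt (fun w => w * φ w) (1 * φ z + z * deriv φ z) z :=
      (hasDerivAt_id z).mul hφz_at.hasDerivAt
    have : ψ = fun w => w * φ w := funext hψeq
    rw [this, hmul.deriv]; ring
  set r := Complex.abs z with hr_def
  set b := Complex.abs (deriv ψ 0) with hb_def
  have hr1 : r < 1 := by simpa [mem_ball_zero_iff] using hz
  have hr0 : 0 ≤ r := Complex.abs.nonneg z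
  have hb0 : 0 ≤ b := Complex.abs.nonneg _
  have hb1 : b ≤ 1 := by rw [hb_def, ← hφ0]; exact hφle 0 (by simp)
  -- unified bounds
  obtain ⟨t, ht0, ht1, htb, hψzle, hSle⟩ :
      ∃ t : ℝ, 0 ≤ t ∧ t ≤ 1 ∧ t * (1 + b * r) ≤ b + r ∧ Complex.abs (ψ z) ≤ r * t ∧
        Complex.abs (deriv ψ z) * (1 - r ^ 2) ≤ t * (1 - r ^ 2) + r * (1 - t ^ 2) := by
    by_cases hlt : ∀ w ∈ ball (0:ℂ) 1, Complex.abs (φ w) < 1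
    · -- Schwarz-Pick case
      have hmφ : MapsTo φ (ball 0 1) (ball 0 1) := by
        intro w hw; rw [mem_ball_zero_iff]; exact hlt w hw
      refine ⟨Complex.abs (φ z), Complex.abs.nonneg _, (hlt z hz).le, ?_, ?_, ?_⟩
      · have := SP1 hφd hmφ hz
        rw [hφ0] at this
        calc Complex.abs (φ z) * (1 + b * r) = Complex.abs (φ z) * (1 + b * r) := rfl
          _ ≤ b + r := by rw [hb_def, hr_def]; linarith [this]
      · rw [hψeq z, map_mul]
      · have hsp2 := SP2 hφd hmφ hz
        rw [hderiv]
        calc Complex.abs (φ z + z * deriv φ z) * (1 - r ^ 2)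
            ≤ (Complex.abs (φ z) + r * Complex.abs (deriv φ z)) * (1 - r ^ 2) := by
              have h1 := Complex.abs.add_le (φ z) (z * deriv φ z)
              rw [map_mul] at h1
              have h0 : (0:ℝ) ≤ 1 - r ^ 2 := by nlinarith
              exact mul_le_mul_of_nonneg_right h1 h0
          _ = Complex.abs (φ z) * (1 - r ^ 2) + r * (Complex.abs (deriv φ z) * (1 - r ^ 2)) := by
              ring
          _ ≤ Complex.abs (φ z) * (1 - r ^ 2) + r * (1 - Complex.abs (φ z) ^ 2) := by
              have h2 : Complex.abs (deriv φ z) * (1 - r ^ 2) ≤ 1 - Complex.abs (φ z) ^ 2 := hsp2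
              have := mul_le_mul_of_nonneg_left h2 hr0
              linarith [this]
    · -- max modulus case: φ constant
      push_neg at hlt
      obtain ⟨w₀, hw₀, hw₀ge⟩ := hlt
      have hw₀eq : Complex.abs (φ w₀) = 1 := le_antisymm (hφle w₀ hw₀) hw₀ge
      have hmax : IsMaxOn (norm ∘ φ) (ball 0 1) w₀ := by
        intro w hw
        simp only [Function.comp_apply, norm_eq_abs, hw₀eq]
        exact hφle w hw
      have heq : EqOn φ (Function.const ℂ (φ w₀)) (ball 0 1) :=
        Complex.eqOn_of_isPreconnected_of_isMaxOn_norm (convex_ball 0 1).isPreconnected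
          isOpen_ball hφd hw₀ hmax
      have hφz : φ z = φ w₀ := heq hz
      have hφ0' : φ 0 = φ w₀ := heq (by simp)
      have hbval : b = 1 := by rw [hb_def, ← hφ0, hφ0', hw₀eq]
      have hdφz : deriv φ z = 0 := by
        have hev : φ =ᶠ[nhds z] Function.const ℂ (φ w₀) :=
          Filter.eventuallyEq_of_mem (isOpen_ball.mem_nhds hz) heq
        rw [hev.deriv_eq]
        exact deriv_const z (φ w₀)
      refine ⟨1, zero_le_one, le_rfl, by rw [hbval]; ring_nf; exact le_rfl, ?_, ?_⟩
      · rw [hψeq z, map_mul, hφz, hw₀eq, mul_one]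
      · rw [hderiv, hdφz, mul_zero, add_zero, hφz, hw₀eq]
        norm_num
  -- finish with the numeric lemma
  have hD : 1 - r ^ 2 * t ^ 2 ≤ Complex.abs (1 - (ψ z) ^ 2) := by
    have h1 : Complex.abs ((ψ z) ^ 2) ≤ (r * t) ^ 2 := by
      rw [map_pow]
      exact pow_le_pow_left₀ (Complex.abs.nonneg _) hψzle 2
    have h2 : 1 - Complex.abs ((ψ z) ^ 2) ≤ Complex.abs (1 - (ψ z) ^ 2) := by
      have := norm_sub_norm_le (1:ℂ) ((ψ z) ^ 2)
      simpa [Complex.norm_eq_abs] using this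
    nlinarith [h2, h1]
  have hS' : Complex.abs (deriv ψ z) * (1 - r ^ 2) ≤ t * (1 - r ^ 2) + r * (1 - t ^ 2) := hSle
  exact mccarty_num hr0 hr1 ht0 ht1 hb0 htb (Complex.abs.nonneg _) hD hS'

theorem disk_containment_G1 (b : ℝ) (hb : |1 + 2 * b| ≤ 1)
    (f h : ℂ → ℂ)
    (hf : DifferentiableOn ℂ f (Metric.ball (0 : ℂ) 1))
    (hf0 : f 0 = 0) (hf1 : deriv f 0 = 1)
    (hfne : ∀ z ∈ Metric.ball (0 : ℂ) 1, z ≠ 0 → f z ≠ 0)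
    (hh : ∀ z, h z = if z = 0 then 1 else (1 + z) ^ 2 * f z / z)
    (hhdiff : DifferentiableOn ℂ h (Metric.ball (0 : ℂ) 1))
    (hhre : ∀ z ∈ Metric.ball (0 : ℂ) 1, 0 < (h z).re)
    (hh1 : deriv h 0 = 2 * (1 + 2 * b)) :
    ∀ (z : ℂ) (r : ℝ), ‖z‖ = r → r < 1 → z ≠ 0 →
      ‖z * deriv f z / f z - ((1 + r ^ 2) / (1 - r ^ 2) : ℝ)‖ ≤
        2 * ((1 + |1 + 2 * b|) * r ^ 3 + 2 * (1 + |1 + 2 * b|) * r ^ 2 +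
          (1 + |1 + 2 * b|) * r) / ((1 - r ^ 2) * (r ^ 2 + 2 * |1 + 2 * b| * r + 1)) := by
  intro z r hzr hr1 hz0
  change Complex.abs z = r at hzr
  show Complex.abs (z * deriv f z / f z - ((1 + r ^ 2) / (1 - r ^ 2) : ℝ)) ≤ _
  subst hzr
  set r := Complex.abs z with hr_def
  have hz : z ∈ ball (0:ℂ) 1 := by rwa [mem_ball_zero_iff]
  have hr0 : 0 ≤ r := Complex.abs.nonneg z
  have h0 : h 0 = 1 := by rw [hh 0]; simp
  -- basic nonvanishing facts
  have hhne1 : ∀ w ∈ ball (0:ℂ) 1, h w + 1 ≠ 0 := by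
    intro w hw hc
    have : (h w + 1).re = 0 := by rw [hc]; simp
    simp only [Complex.add_re, Complex.one_re] at this
    linarith [hhre w hw]
  have hhne : ∀ w ∈ ball (0:ℂ) 1, h w ≠ 0 := by
    intro w hw hc
    have : (h w).re = 0 := by rw [hc]; simp
    linarith [hhre w hw]
  -- define ψ
  set ψ := fun w => (h w - 1) / (h w + 1) with hψ_def
  have hψdiff : DifferentiableOn ℂ ψ (ball 0 1) :=
    (hhdiff.sub_const 1).div (hhdiff.add_const 1) hhne1
  have hψ0 : ψ 0 = 0 := by simp [hψ_def, h0]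
  have hψlt : ∀ w ∈ ball (0:ℂ) 1, Complex.abs (ψ w) < 1 := by
    intro w hw
    have hne := hhne1 w hw
    rw [hψ_def]
    simp only
    rw [map_div₀, div_lt_one (by simpa [Complex.abs.pos_iff] using hne)]
    refine abs_lt_of_normSq_lt ?_
    have e1 : Complex.normSq (h w - 1) = Complex.normSq (h w) + 1 - 2 * (h w).re := by
      rw [Complex.normSq_sub]; simp
    have e2 : Complex.normSq (h w + 1) = Complex.normSq (h w) + 1 + 2 * (h w).re := by
      rw [Complex.normSq_add]; simp
    rw [e1, e2]
    linarith [hhre w hw]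
  -- derivative of ψ at a point w of the ball
  have hψderiv : ∀ w ∈ ball (0:ℂ) 1, deriv ψ w = 2 * deriv h w / (h w + 1) ^ 2 := by
    intro w hw
    have hdh : HasDerivAt h (deriv h w) w :=
      (hhdiff.differentiableAt (isOpen_ball.mem_nhds hw)).hasDerivAt
    have hdψ : HasDerivAt ψ ((deriv h w * (h w + 1) - (h w - 1) * deriv h w) / (h w + 1) ^ 2) w :=
      (hdh.sub_const 1).div (hdh.add_const 1) (hhne1 w hw)
    rw [hdψ.deriv]
    have hne := hhne1 w hw
    field_simp
    ring
  have hψd0 : deriv ψ 0 = ((1 + 2 * b : ℝ) : ℂ) := by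
    rw [hψderiv 0 (by simp), h0, hh1]
    push_cast
    norm_num
    ring
  have habsd0 : Complex.abs (deriv ψ 0) = |1 + 2 * b| := by
    rw [hψd0, Complex.abs_ofReal]
  -- identity: z h'/h = 2 z ψ' / (1 - ψ²)
  have hHne := hhne z hz
  have hH1ne := hhne1 z hz
  have hPsq : 1 - (ψ z) ^ 2 = 4 * h z / (h z + 1) ^ 2 := by
    rw [hψ_def]
    simp only
    field_simp
    ring
  have hkey1 : z * deriv h z / h z = 2 * z * deriv ψ z / (1 - (ψ z) ^ 2) := by
    rw [hψderiv z hz, hPsq]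
    field_simp
    ring
  -- f in terms of h near z
  have h1z : (1:ℂ) + z ≠ 0 := by
    intro hc
    have hr1' : r = 1 := by
      rw [hr_def, show z = -1 by linear_combination hc]
      simp
    linarith
  have hfz : ∀ w : ℂ, w ≠ 0 → (1:ℂ) + w ≠ 0 → f w = w * h w / (1 + w) ^ 2 := by
    intro w hw0 hw1
    have := hh w
    rw [if_neg hw0] at this
    field_simp [hw0] at this
    rw [eq_div_iff (pow_ne_zero 2 hw1)]
    linear_combination -this
  have hderivf : deriv f z = ((h z + z * deriv h z) * (1 + z) ^ 2
      - z * h z * (2 * (1 + z))) / ((1 + z) ^ 2) ^ 2 := by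
    have hdh : HasDerivAt h (deriv h z) z :=
      (hhdiff.differentiableAt (isOpen_ball.mem_nhds hz)).hasDerivAt
    have hnum : HasDerivAt (fun w => w * h w) (1 * h z + z * deriv h z) z :=
      (hasDerivAt_id z).mul hdh
    have hden : HasDerivAt (fun w : ℂ => (1 + w) ^ 2) (2 * (1 + z)) z := by
      have := ((hasDerivAt_id z).const_add 1).pow 2
      exact this.congr_deriv (by simp)
    have hg : HasDerivAt (fun w => w * h w / (1 + w) ^ 2)
        (((1 * h z + z * deriv h z) * (1 + z) ^ 2 - z * h z * (2 * (1 + z))) / ((1 + z) ^ 2) ^ 2) z :=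
      hnum.div hden (pow_ne_zero 2 h1z)
    have hev : f =ᶠ[nhds z] (fun w => w * h w / (1 + w) ^ 2) := by
      have hopen : IsOpen {w : ℂ | w ≠ 0 ∧ (1:ℂ) + w ≠ 0} := by
        apply IsOpen.inter
        · exact isOpen_compl_singleton
        · exact isOpen_ne.preimage (by fun_prop)
      have hmem : {w : ℂ | w ≠ 0 ∧ (1:ℂ) + w ≠ 0} ∈ nhds z :=
        hopen.mem_nhds ⟨hz0, h1z⟩
      filter_upwards [hmem] with w hw
      exact hfz w hw.1 hw.2
    rw [hev.deriv_eq, hg.deriv]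
    ring_nf
  have hfzz : f z = z * h z / (1 + z) ^ 2 := hfz z hz0 h1z
  have hfne' : f z ≠ 0 := hfne z hz hz0
  have hkey2 : z * deriv f z / f z = z * deriv h z / h z + (1 - z) / (1 + z) := by
    rw [hderivf, hfzz]
    field_simp
    ring
  -- the Möbius term
  have hr2pos : (0:ℝ) < 1 - r ^ 2 := by nlinarith
  have hmob : Complex.abs ((1 - z) / (1 + z) - ((1 + r ^ 2) / (1 - r ^ 2) : ℝ))
      = 2 * r / (1 - r ^ 2) := by
    have hzz : z * (starRingEnd ℂ) z = ((r : ℝ) : ℂ) ^ 2 := by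
      rw [Complex.mul_conj]
      norm_cast
      rw [← Complex.sq_abs]
    have hrne : ((1 - r ^ 2 : ℝ) : ℂ) ≠ 0 := by
      rw [Complex.ofReal_ne_zero]; linarith
    have hrne' : (1 : ℂ) - ((r:ℝ):ℂ) ^ 2 ≠ 0 := by
      intro hc; apply hrne; push_cast; linear_combination hc
    have key : (1 - z) / (1 + z) - (((1 + r ^ 2) / (1 - r ^ 2) : ℝ) : ℂ)
        = -2 * z * (1 + (starRingEnd ℂ) z) / ((1 + z) * ((1 - r ^ 2 : ℝ) : ℂ)) := by
      push_cast
      rw [div_sub_div _ _ h1z hrne', div_eq_div_iff (mul_ne_zero h1z hrne') (mul_ne_zero h1z (by push_cast at hrne ⊢; exact hrne))]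
      push_cast
      linear_combination ((-2*((r:ℂ)^2) + 2 - 2*z*((r:ℂ)^2) + 2*z)) * hzz
    rw [key]
    rw [map_div₀, map_mul, map_mul, map_mul]
    have hconj : (1 : ℂ) + (starRingEnd ℂ) z = (starRingEnd ℂ) (1 + z) := by
      rw [map_add, map_one]
    rw [hconj, Complex.abs_conj, Complex.abs_ofReal, abs_of_pos hr2pos]
    have habs1z : Complex.abs (1 + z) ≠ 0 := by
      simpa [Complex.abs.ne_zero_iff] using h1z
    field_simp
    rw [hr_def, AbsoluteValue.map_neg, Complex.abs_ofNat]
    ring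
  -- McCarty bound
  have hmc := mccarty hψdiff hψ0 hψlt hz
  rw [habsd0, ← hr_def] at hmc
  have habs_hterm : Complex.abs (z * deriv h z / h z)
      = 2 * r * Complex.abs (deriv ψ z) / Complex.abs (1 - (ψ z) ^ 2) := by
    rw [hkey1, map_div₀, map_mul, map_mul]
    norm_num
    rw [← hr_def]
  -- triangle inequality
  set b₁ := |1 + 2 * b| with hb1_def
  have hb10 : 0 ≤ b₁ := abs_nonneg _
  have htri : Complex.abs (z * deriv f z / f z - ((1 + r ^ 2) / (1 - r ^ 2) : ℝ))
      ≤ Complex.abs (z * deriv h z / h z)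
        + Complex.abs ((1 - z) / (1 + z) - ((1 + r ^ 2) / (1 - r ^ 2) : ℝ)) := by
    calc Complex.abs (z * deriv f z / f z - ((1 + r ^ 2) / (1 - r ^ 2) : ℝ))
        = Complex.abs (z * deriv h z / h z
            + ((1 - z) / (1 + z) - ((1 + r ^ 2) / (1 - r ^ 2) : ℝ))) := by
          rw [hkey2]; ring_nf
      _ ≤ _ := Complex.abs.add_le _ _
  have hfinal : 2 * r * (b₁ * r ^ 2 + 2 * r + b₁) / ((1 - r ^ 2) * (r ^ 2 + 2 * b₁ * r + 1))
      + 2 * r / (1 - r ^ 2)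
      = 2 * ((1 + b₁) * r ^ 3 + 2 * (1 + b₁) * r ^ 2 + (1 + b₁) * r)
        / ((1 - r ^ 2) * (r ^ 2 + 2 * b₁ * r + 1)) := by
    have hd1 : (1 - r ^ 2) ≠ 0 := by linarith
    have hd2 : (r ^ 2 + 2 * b₁ * r + 1) ≠ 0 := by nlinarith [mul_nonneg hb10 hr0]
    field_simp
    ring
  calc Complex.abs (z * deriv f z / f z - ((1 + r ^ 2) / (1 - r ^ 2) : ℝ))
      ≤ Complex.abs (z * deriv h z / h z)
        + Complex.abs ((1 - z) / (1 + z) - ((1 + r ^ 2) / (1 - r ^ 2) : ℝ)) := htri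
    _ ≤ 2 * r * (b₁ * r ^ 2 + 2 * r + b₁) / ((1 - r ^ 2) * (r ^ 2 + 2 * b₁ * r + 1))
        + 2 * r / (1 - r ^ 2) := by
          rw [hmob]
          refine add_le_add ?_ le_rfl
          rw [habs_hterm]
          exact hmc
    _ = _ := by rw [hfinal]
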